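/- Under the construction hypotheses (a distributive lattice D, groups G_α, and transitive isomorphisms φ_{α,β} for β ≤ α with ψ = φ^{-1}), the multiplicative semigroup (S, ·) on S = Σ_{α∈D} G_α is a Clifford semigroup: every element x ∈ S is regular (there exists y ∈ S with x·y·x = x), and every multiplicative idempotent of S is central (e·x = x·e for every idempotent e and every x ∈ S). -/

import Mathlib

variable {D : Type*} [DistribLattice D] {G : D → Type*} [∀ α : D, Group (G α)]

/-- Multiplication on the disjoint union `S = Σ α, G α`:
`(α, x) · (β, y) = (αβ, φ_{α,αβ}(x) · φ_{β,αβ}(y))`. -/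
def cMul (φ : ∀ α β : D, β ≤ α → (G α ≃* G β)) (s t : Σ α : D, G α) :
    Σ α : D, G α :=
  ⟨s.1 ⊓ t.1,
    φ s.1 (s.1 ⊓ t.1) inf_le_left s.2 * φ t.1 (s.1 ⊓ t.1) inf_le_right t.2⟩

/-- Addition on the disjoint union `S = Σ α, G α`:
`(α, x) + (β, y) = (α + β, ψ_{α,α+β}(x))`, where `ψ_{β,α} = (φ_{α,β})⁻¹`
for `β ≤ α` (each `G α` carries the left-zero addition). -/
def cAdd (φ : ∀ α β : D, β ≤ α → (G α ≃* G β)) (s t : Σ α : D, G α) :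
    Σ α : D, G α :=
  ⟨s.1 ⊔ t.1, (φ (s.1 ⊔ t.1) s.1 le_sup_left).symm s.2⟩

/-- Under the construction hypotheses, the multiplicative
semigroup `(S, ·)` on `S = Σ α, G α` is a Clifford semigroup: every element
`x ∈ S` is regular (there is `y ∈ S` with `x·y·x = x`), and every
multiplicative idempotent of `S` is central. -/
theorem construction_mul_clifford
    (φ : ∀ α β : D, β ≤ α → (G α ≃* G β))
    (hφ_id : ∀ (α : D) (x : G α), φ α α le_rfl x = x)
    (hφ_trans : ∀ {α β γ : D} (h1 : γ ≤ β) (h2 : β ≤ α) (x : G α),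
      φ β γ h1 (φ α β h2 x) = φ α γ (h1.trans h2) x)
    :
    (∀ x : Σ α : D, G α, ∃ y : Σ α : D, G α, cMul φ (cMul φ x y) x = x) ∧
    (∀ e : Σ α : D, G α, cMul φ e e = e →
      ∀ x : Σ α : D, G α, cMul φ e x = cMul φ x e) := by
  have key : ∀ {α β γ : D} (h : β = γ) (hβ : β ≤ α) (hγ : γ ≤ α) (x : G α),
      (⟨β, φ α β hβ x⟩ : Σ α : D, G α) = ⟨γ, φ α γ hγ x⟩ := by
    intro α β γ h hβ hγ x; subst h; rfl
  have key' : ∀ {α β : D} (h : β = α) (hβ : β ≤ α) (x : G α),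
      (⟨β, φ α β hβ x⟩ : Σ α : D, G α) = ⟨α, x⟩ := by
    intro α β h hβ x; rw [key h hβ le_rfl x, hφ_id]
  constructor
  · rintro ⟨α, x⟩
    refine ⟨⟨α, x⁻¹⟩, ?_⟩
    simp only [cMul, map_inv, mul_inv_cancel, map_one, one_mul]
    show (⟨α ⊓ α ⊓ α, φ (α ⊓ α) (α ⊓ α ⊓ α) inf_le_left 1 * φ α (α ⊓ α ⊓ α) inf_le_right x⟩ : Σ α : D, G α) = ⟨α, x⟩
    rw [map_one, one_mul]
    exact key' (by simp) _ x
  · rintro ⟨ε, u⟩ he ⟨α, x⟩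
    have h1 : (⟨ε ⊓ ε, φ ε (ε ⊓ ε) inf_le_left u * φ ε (ε ⊓ ε) inf_le_right u⟩
        : Σ α : D, G α) = ⟨ε, u⟩ := he
    have h2 := key' (inf_idem ε) inf_le_left u
    have h3 : φ ε (ε ⊓ ε) inf_le_left u * φ ε (ε ⊓ ε) inf_le_left u
        = φ ε (ε ⊓ ε) inf_le_left u := by
      have h4 := h1.trans h2.symm
      injection h4 with _ h5
    have hu1 : u = 1 := by
      have hw : φ ε (ε ⊓ ε) inf_le_left u = 1 :=
        mul_right_cancel (h3.trans (one_mul _).symm)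
      exact (MulEquiv.map_eq_one_iff _).mp hw
    subst hu1
    simp only [cMul, map_one, one_mul, mul_one]
    exact key (inf_comm ε α) _ _ x
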